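/- Given positive variances V_ℓ and costs C_ℓ for ℓ = 0,...,L, the choice N_ℓ = μ √(V_ℓ/C_ℓ) (with appropriate proportionality constant μ chosen so that Σ V_ℓ/N_ℓ equals a prescribed tolerance ε²/2) minimizes the total cost Σ_ℓ N_ℓ C_ℓ subject to the constraint Σ_ℓ V_ℓ/N_ℓ ≤ ε²/2, when the N_ℓ are allowed to be positive reals. -/

import Mathlib

open Finset

/-- Optimality of the MLMC sample allocation: with `Nopt ℓ = μ * √(V ℓ / C ℓ)`
where the proportionality constant `μ` is chosen so that
`∑ V ℓ / Nopt ℓ = ε²/2`, the allocation `Nopt` minimizes the total cost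
`∑ N ℓ * C ℓ` among all real positive allocations satisfying the variance
constraint `∑ V ℓ / N ℓ ≤ ε²/2`. -/
theorem mlmc_optimal_sample_allocation
    (L : ℕ) (V C : Fin (L + 1) → ℝ)
    (hV : ∀ ℓ, 0 < V ℓ) (hC : ∀ ℓ, 0 < C ℓ)
    (ε : ℝ) (hε : 0 < ε)
    (μ : ℝ) (hμ : μ = (2 / ε ^ 2) * ∑ ℓ, Real.sqrt (V ℓ * C ℓ))
    (Nopt : Fin (L + 1) → ℝ)
    (hNopt : ∀ ℓ, Nopt ℓ = μ * Real.sqrt (V ℓ / C ℓ)) :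
    (∑ ℓ, V ℓ / Nopt ℓ = ε ^ 2 / 2) ∧
    ∀ N : Fin (L + 1) → ℝ, (∀ ℓ, 0 < N ℓ) →
      (∑ ℓ, V ℓ / N ℓ ≤ ε ^ 2 / 2) →
      ∑ ℓ, Nopt ℓ * C ℓ ≤ ∑ ℓ, N ℓ * C ℓ := by
  have hS : 0 < ∑ ℓ, Real.sqrt (V ℓ * C ℓ) := by
    apply Finset.sum_pos
    · intro i _
      exact Real.sqrt_pos.mpr (mul_pos (hV i) (hC i))
    · exact Finset.univ_nonempty
  set S := ∑ ℓ, Real.sqrt (V ℓ * C ℓ) with hSdef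
  have hμpos : 0 < μ := by rw [hμ]; positivity
  have key : ∀ ℓ, V ℓ / Nopt ℓ = Real.sqrt (V ℓ * C ℓ) / μ ∧
      Nopt ℓ * C ℓ = μ * Real.sqrt (V ℓ * C ℓ) := by
    intro ℓ
    have ha : 0 < Real.sqrt (V ℓ) := Real.sqrt_pos.mpr (hV ℓ)
    have hb : 0 < Real.sqrt (C ℓ) := Real.sqrt_pos.mpr (hC ℓ)
    have hV' : Real.sqrt (V ℓ) ^ 2 = V ℓ := Real.sq_sqrt (hV ℓ).le
    have hC' : Real.sqrt (C ℓ) ^ 2 = C ℓ := Real.sq_sqrt (hC ℓ).le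
    have hdiv : Real.sqrt (V ℓ / C ℓ) = Real.sqrt (V ℓ) / Real.sqrt (C ℓ) :=
      Real.sqrt_div (hV ℓ).le _
    have hmul : Real.sqrt (V ℓ * C ℓ) = Real.sqrt (V ℓ) * Real.sqrt (C ℓ) :=
      Real.sqrt_mul (hV ℓ).le _
    constructor
    · rw [hNopt ℓ, hdiv, hmul, ← hV']
      field_simp
      simp [hV']
    · rw [hNopt ℓ, hdiv, hmul]
      rw [← hC']
      field_simp
      simp [hC']
  have hsum1 : ∑ ℓ, V ℓ / Nopt ℓ = S / μ := by
    rw [Finset.sum_congr rfl fun ℓ _ => (key ℓ).1, ← Finset.sum_div]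
  have hsum2 : ∑ ℓ, Nopt ℓ * C ℓ = μ * S := by
    rw [Finset.sum_congr rfl fun ℓ _ => (key ℓ).2, ← Finset.mul_sum]
  have hSμ : S / μ = ε ^ 2 / 2 := by
    rw [hμ]; field_simp
  constructor
  · rw [hsum1, hSμ]
  · intro N hN hcon
    have cauchy : (∑ ℓ, Real.sqrt (V ℓ / N ℓ) * Real.sqrt (N ℓ * C ℓ)) ^ 2 ≤
        (∑ ℓ, Real.sqrt (V ℓ / N ℓ) ^ 2) * ∑ ℓ, Real.sqrt (N ℓ * C ℓ) ^ 2 :=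
      Finset.sum_mul_sq_le_sq_mul_sq _ _ _
    have e1 : ∀ ℓ : Fin (L + 1), Real.sqrt (V ℓ / N ℓ) * Real.sqrt (N ℓ * C ℓ) =
        Real.sqrt (V ℓ * C ℓ) := by
      intro ℓ
      rw [← Real.sqrt_mul (div_nonneg (hV ℓ).le (hN ℓ).le)]
      congr 1
      field_simp [(hN ℓ).ne']
    have e2 : ∀ ℓ : Fin (L + 1), Real.sqrt (V ℓ / N ℓ) ^ 2 = V ℓ / N ℓ := by
      intro ℓ; exact Real.sq_sqrt (div_nonneg (hV ℓ).le (hN ℓ).le)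
    have e3 : ∀ ℓ : Fin (L + 1), Real.sqrt (N ℓ * C ℓ) ^ 2 = N ℓ * C ℓ := by
      intro ℓ; exact Real.sq_sqrt (mul_pos (hN ℓ) (hC ℓ)).le
    rw [Finset.sum_congr rfl fun ℓ _ => e1 ℓ, Finset.sum_congr rfl fun ℓ _ => e2 ℓ,
      Finset.sum_congr rfl fun ℓ _ => e3 ℓ] at cauchy
    have hT : 0 ≤ ∑ ℓ, N ℓ * C ℓ := by
      apply Finset.sum_nonneg; intro i _; exact (mul_pos (hN i) (hC i)).le
    have h2 : S ^ 2 ≤ ε ^ 2 / 2 * ∑ ℓ, N ℓ * C ℓ :=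
      cauchy.trans (mul_le_mul_of_nonneg_right hcon hT)
    rw [hsum2, hμ]
    rw [div_mul_eq_mul_div, div_mul_eq_mul_div, div_le_iff₀ (by positivity)]
    nlinarith [h2]
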